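/- The group with presentation ⟨x, y | x⁻¹y²x = y³, x = y x y x⁻¹⟩ is trivial. -/

import Mathlib

theorem stmt_1
    (x y : FreeGroup (Fin 2)) (hx : x = FreeGroup.of 0) (hy : y = FreeGroup.of 1) :
    ∀ g : PresentedGroup ({x⁻¹ * y ^ 2 * x * (y ^ 3)⁻¹, x * (y * x * y * x⁻¹)⁻¹} :
      Set (FreeGroup (Fin 2))), g = 1 := by
  set S : Set (FreeGroup (Fin 2)) :=
    {x⁻¹ * y ^ 2 * x * (y ^ 3)⁻¹, x * (y * x * y * x⁻¹)⁻¹} with hS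
  intro g
  set a : PresentedGroup S := PresentedGroup.of 0 with ha
  set b : PresentedGroup S := PresentedGroup.of 1 with hb
  have hrel : ∀ r ∈ S, PresentedGroup.mk S r = 1 := fun r hr =>
    (QuotientGroup.eq_one_iff r).mpr (Subgroup.subset_normalClosure hr)
  have h1 : a⁻¹ * b ^ 2 * a * (b ^ 3)⁻¹ = 1 := by
    have := hrel _ (Or.inl rfl)
    simpa [hx, hy, map_mul, map_inv, map_pow, ha, hb, PresentedGroup.of] using this
  have h2 : a * (b * a * b * a⁻¹)⁻¹ = 1 := by
    have := hrel _ (Or.inr rfl)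
    simpa [hx, hy, map_mul, map_inv, map_pow, ha, hb, PresentedGroup.of] using this
  have e1 : a⁻¹ * b ^ 2 * a = b ^ 3 := mul_inv_eq_one.mp h1
  have e2 : a * a = b * a * b := by
    have h2' : a = b * a * b * a⁻¹ := mul_inv_eq_one.mp h2
    calc a * a = (b * a * b * a⁻¹) * a := by rw [← h2']
      _ = b * a * b := by group
  have e4 : a⁻¹ * b ^ 4 * a = b ^ 6 := by
    have h : a⁻¹ * b ^ 4 * a = (a⁻¹ * b ^ 2 * a) * (a⁻¹ * b ^ 2 * a) := by group
    rw [h, e1]; group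
  have e6 : a⁻¹ * b ^ 6 * a = b ^ 9 := by
    have h : a⁻¹ * b ^ 6 * a
        = (a⁻¹ * b ^ 2 * a) * (a⁻¹ * b ^ 2 * a) * (a⁻¹ * b ^ 2 * a) := by group
    rw [h, e1]; group
  have e9 : b ^ 6 * b ^ 3 = b ^ 6 * 1 := by
    have h : b ^ 9 = (a * a)⁻¹ * b ^ 4 * (a * a) := by rw [← e6, ← e4]; group
    rw [e2] at h
    have h' : (b * a * b)⁻¹ * b ^ 4 * (b * a * b) = b⁻¹ * (a⁻¹ * b ^ 4 * a) * b := by group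
    rw [h', e4] at h
    rw [mul_one, ← pow_add]
    rw [h]; group
  have hb3 : b ^ 3 = 1 := mul_left_cancel e9
  have hb2 : b ^ 2 = 1 := by
    rw [hb3] at e1
    calc b ^ 2 = a * (a⁻¹ * b ^ 2 * a) * a⁻¹ := by group
      _ = 1 := by rw [e1]; group
  have hbone : b = 1 := by
    calc b = b ^ 3 * (b ^ 2)⁻¹ := by group
      _ = 1 := by rw [hb3, hb2]; group
  have haone : a = 1 := by
    rw [hbone, one_mul, mul_one] at e2
    exact mul_eq_right.mp e2
  have hmem := PresentedGroup.generated_by S ⊥ (fun j => by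
    fin_cases j
    · exact Subgroup.mem_bot.mpr haone
    · exact Subgroup.mem_bot.mpr hbone) g
  exact Subgroup.mem_bot.mp hmem
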